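/- Let Δ = 0.013, let η ∈ (0.509, 1], let n, q, k be natural numbers with n ≥ 10, 2q ≤ n − 10, and k ≤ log₂(⌈4/(2^{2/3}·(η·Δ + 2)^{1/3} − 2)⌉)·2^{2q+2}. Then for every function g : ({0,1}^k)³ → {0,1}, the number of functions f : {0,1}^n × {0,1}^n → {0,1} for which there exist f_A, f_B : {0,1}^n → {0,1}^k and λ ∈ {0,1}^k with |{(x,y) : f(x,y) = g(f_A(x), f_B(y), λ)}| ≥ (3/4)·2^{2n}, is strictly less than 2^{−2^n} · 2^{2^{2n}}. Equivalently, a uniformly random f : {0,1}^n × {0,1}^n → {0,1} satisfies, with probability greater than 1 − 2^{−2^n}, that for all f_A, f_B, λ the equality f(x,y) = g(f_A(x), f_B(y), λ) holds on fewer than 3/4 of all pairs (x,y). -/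

import Mathlib

open BigOperators

noncomputable section


private lemma aux_count_close {α : Type*} [Fintype α] [DecidableEq α] (h : α → Bool) (m : ℕ) :
    (Finset.univ.filter fun f : α → Bool =>
        (Finset.univ.filter fun x => f x ≠ h x).card ≤ m).card ≤
      ∑ i ∈ Finset.range (m + 1), (Fintype.card α).choose i := by
  classical
  set B := (Finset.range (m+1)).biUnion
      (fun i => Finset.powersetCard i (Finset.univ : Finset α)) with hB
  have h1 : (Finset.univ.filter fun f : α → Bool =>
      (Finset.univ.filter fun x => f x ≠ h x).card ≤ m).card ≤ B.card := by
    apply Finset.card_le_card_of_injOn (fun f => Finset.univ.filter fun x => f x ≠ h x)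
    · intro f hf
      simp only [Finset.mem_coe, Finset.mem_filter, Finset.mem_univ, true_and] at hf
      refine Finset.mem_biUnion.mpr ⟨(Finset.univ.filter fun x => f x ≠ h x).card,
        Finset.mem_range.mpr (by omega), ?_⟩
      exact Finset.mem_powersetCard.mpr ⟨Finset.subset_univ _, rfl⟩
    · intro f1 _ f2 _ heq
      simp only at heq
      funext x
      have hx : (f1 x ≠ h x) ↔ (f2 x ≠ h x) := by
        constructor <;> intro hx
        · have := heq ▸ Finset.mem_filter.mpr ⟨Finset.mem_univ x, hx⟩
          exact (Finset.mem_filter.mp this).2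
        · have := heq.symm ▸ Finset.mem_filter.mpr ⟨Finset.mem_univ x, hx⟩
          exact (Finset.mem_filter.mp this).2
      revert hx
      cases h x <;> cases hf1 : f1 x <;> cases hf2 : f2 x <;> simp
  refine h1.trans ?_
  refine (Finset.card_biUnion_le).trans ?_
  apply Finset.sum_le_sum
  intro i _
  rw [Finset.card_powersetCard, Finset.card_univ]

private lemma aux_sum_choose (N m : ℕ) (hm : m ≤ N) :
    (∑ i ∈ Finset.range (m + 1), ((N.choose i : ℕ) : ℝ)) ≤ (4/3 : ℝ) ^ N * 3 ^ m := by
  have h1 : (∑ i ∈ Finset.range (m + 1), ((N.choose i : ℕ) : ℝ)) * (1/3 : ℝ) ^ m ≤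
      ∑ i ∈ Finset.range (m + 1), ((N.choose i : ℕ) : ℝ) * (1/3 : ℝ) ^ i := by
    rw [Finset.sum_mul]
    apply Finset.sum_le_sum
    intro i hi
    have : ((1:ℝ)/3) ^ m ≤ (1/3) ^ i :=
      pow_le_pow_of_le_one (by norm_num) (by norm_num) (by
        have := Finset.mem_range.mp hi; omega)
    have hc : (0:ℝ) ≤ (N.choose i : ℝ) := by positivity
    nlinarith
  have h2 : (∑ i ∈ Finset.range (m + 1), ((N.choose i : ℕ) : ℝ) * (1/3 : ℝ) ^ i) ≤
      ∑ i ∈ Finset.range (N + 1), ((N.choose i : ℕ) : ℝ) * (1/3 : ℝ) ^ i := by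
    apply Finset.sum_le_sum_of_subset_of_nonneg
    · exact Finset.range_subset_range.mpr (by omega)
    · intro i _ _; positivity
  have h3 : (∑ i ∈ Finset.range (N + 1), ((N.choose i : ℕ) : ℝ) * (1/3 : ℝ) ^ i) =
      (4/3 : ℝ) ^ N := by
    have := add_pow (1/3 : ℝ) 1 N
    simp only [one_pow, mul_one] at this
    rw [show (4/3:ℝ) = 1/3 + 1 by norm_num, this]
    apply Finset.sum_congr rfl
    intro i _
    ring
  have hkey : (∑ i ∈ Finset.range (m + 1), ((N.choose i : ℕ) : ℝ)) * (1/3 : ℝ) ^ m ≤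
      (4/3 : ℝ) ^ N := by linarith
  have h3m : ((1:ℝ)/3) ^ m * 3 ^ m = 1 := by
    rw [← mul_pow]; norm_num
  calc (∑ i ∈ Finset.range (m + 1), ((N.choose i : ℕ) : ℝ))
      = (∑ i ∈ Finset.range (m + 1), ((N.choose i : ℕ) : ℝ)) * ((1/3:ℝ)^m * 3^m) := by
        rw [h3m, mul_one]
    _ = ((∑ i ∈ Finset.range (m + 1), ((N.choose i : ℕ) : ℝ)) * (1/3:ℝ)^m) * 3^m := by ring
    _ ≤ (4/3 : ℝ) ^ N * 3 ^ m := by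
        apply mul_le_mul_of_nonneg_right hkey (by positivity)

private lemma aux_logb_le (Δ : ℝ) (hΔ : Δ = 0.013) (η : ℝ)
    (hη0 : 0.509 < η) (hη1 : η ≤ 1) :
    Real.logb 2 ((⌈4 / (2 ^ ((2 : ℝ) / 3) * (η * Δ + 2) ^ ((1 : ℝ) / 3) - 2)⌉ : ℤ) : ℝ) ≤ 11 := by
  set a : ℝ := η * Δ + 2 with ha
  have ha0 : (0:ℝ) < a := by rw [ha, hΔ]; nlinarith
  have hcube : ((1025:ℝ)/512)^(3:ℕ) ≤ 4 * a := by
    rw [ha, hΔ]; nlinarith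
  have hroot : (1025:ℝ)/512 ≤ 2 ^ ((2:ℝ)/3) * a ^ ((1:ℝ)/3) := by
    have e1 : (2:ℝ) ^ ((2:ℝ)/3) * a ^ ((1:ℝ)/3) = (4 * a) ^ ((1:ℝ)/3) := by
      rw [show (2:ℝ)/3 = 2 * (1/3) by ring, Real.rpow_mul (by norm_num : (0:ℝ) ≤ 2)]
      rw [show ((2:ℝ) ^ (2:ℝ)) = 4 by
        rw [show (2:ℝ) = ((2:ℕ):ℝ) from by norm_num, Real.rpow_natCast]; norm_num]
      rw [← Real.mul_rpow (by norm_num) ha0.le]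
    have e2 : ((1025:ℝ)/512) = (((1025:ℝ)/512)^(3:ℕ)) ^ ((1:ℝ)/3) := by
      rw [← Real.rpow_natCast ((1025:ℝ)/512) 3, ← Real.rpow_mul (by norm_num)]
      norm_num
    rw [e1, e2]
    exact Real.rpow_le_rpow (by positivity) hcube (by norm_num)
  set d : ℝ := 2 ^ ((2:ℝ)/3) * a ^ ((1:ℝ)/3) - 2 with hd
  clear_value d
  have hd0 : (1:ℝ)/512 ≤ d := by rw [hd]; linarith
  have hdpos : (0:ℝ) < d := by linarith
  have hCpos : 0 < ⌈4 / d⌉ := Int.ceil_pos.mpr (by positivity)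
  have hCle : ⌈4 / d⌉ ≤ 2048 := by
    apply Int.ceil_le.mpr
    rw [div_le_iff₀ hdpos]
    push_cast
    nlinarith
  have h1 : ((⌈4 / d⌉ : ℤ) : ℝ) ≤ 2048 := by exact_mod_cast hCle
  have h2 : (0:ℝ) < ((⌈4 / d⌉ : ℤ) : ℝ) := by exact_mod_cast hCpos
  calc Real.logb 2 ((⌈4 / d⌉ : ℤ) : ℝ) ≤ Real.logb 2 2048 :=
        Real.logb_le_logb_of_le (by norm_num) h2 h1
    _ = 11 := by
        rw [show (2048:ℝ) = 2 ^ (11:ℕ) by norm_num, Real.logb_pow,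
          Real.logb_self_eq_one (by norm_num)]
        norm_num

private lemma aux_nat_ineq (n k : ℕ) (hn : 10 ≤ n) (hk : k ≤ 11 * 2^(n-8)) :
    2^(k + k*2^n + k*2^n) * 4^(2^(2*n)) <
      2^(2^(2*n) - 2^n) * 27^(2^(2*n-2)) := by
  set t := 2^(n-8) with htd
  set m4 := 2^(2*n-4) with hm4d
  have h2n : 2^n = 256 * t := by
    rw [htd]
    conv_lhs => rw [show n = 8 + (n-8) by omega]
    rw [pow_add]; norm_num
  have hm4 : m4 = 4096 * (t * t) := by
    rw [hm4d, htd]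
    conv_lhs => rw [show 2*n-4 = 12 + ((n-8)+(n-8)) by omega]
    rw [pow_add, pow_add]; ring_nf
  have hm2 : 2^(2*n-2) = 4 * m4 := by
    rw [hm4d]
    conv_lhs => rw [show 2*n-2 = 2 + (2*n-4) by omega]
    rw [pow_add]; norm_num
  have hN : 2^(2*n) = 16 * m4 := by
    rw [hm4d]
    conv_lhs => rw [show 2*n = 4 + (2*n-4) by omega]
    rw [pow_add]; norm_num
  have ht4 : 4 ≤ t := by
    rw [htd]
    calc (4:ℕ) = 2^2 := rfl
      _ ≤ 2^(n-8) := Nat.pow_le_pow_right (by norm_num) (by omega)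
  have h4eq : (4:ℕ)^(2^(2*n)) = 2^(2 * 2^(2*n)) := by
    rw [show (4:ℕ) = 2^2 by norm_num, ← pow_mul]
  have hexp : k + k*2^n + k*2^n + 2 * 2^(2*n) < (2^(2*n) - 2^n) + 19 * m4 := by
    have hkt : k * t ≤ 11 * (t * t) := by
      calc k * t ≤ (11 * t) * t := Nat.mul_le_mul_right t hk
        _ = 11 * (t * t) := by ring
    have h1 : k + k*2^n + k*2^n + 2*2^(2*n) + 2^n < 2^(2*n) + 19*m4 := by
      rw [h2n, hN]
      have hk' : k ≤ 11 * t := hk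
      nlinarith [hkt, ht4, hm4]
    have h2 : 2^n ≤ 2^(2*n) := Nat.pow_le_pow_right (by norm_num) (by omega)
    omega
  calc 2^(k + k*2^n + k*2^n) * 4^(2^(2*n))
      = 2^(k + k*2^n + k*2^n + 2 * 2^(2*n)) := by rw [h4eq, ← pow_add]
    _ < 2^((2^(2*n) - 2^n) + 19 * m4) := Nat.pow_lt_pow_right (by norm_num) hexp
    _ = 2^(2^(2*n) - 2^n) * (2^19)^m4 := by rw [pow_add, pow_mul 2 19 m4]
    _ ≤ 2^(2^(2*n) - 2^n) * (27^4)^m4 := by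
        apply Nat.mul_le_mul_left
        exact Nat.pow_le_pow_left (by norm_num) m4
    _ = 2^(2^(2*n) - 2^n) * 27^(2^(2*n-2)) := by rw [← pow_mul, hm2]

set_option maxHeartbeats 1000000 in
/-- For Δ = 0.013, η ∈ (0.509, 1], n ≥ 10, 2q ≤ n − 10 and
k ≤ log₂(⌈4/(2^{2/3}(ηΔ+2)^{1/3} − 2)⌉)·2^{2q+2}, for any g the number of functions
f : {0,1}ⁿ × {0,1}ⁿ → {0,1} admitting f_A, f_B, λ with
f(x,y) = g(f_A(x), f_B(y), λ) on at least 3/4 of all pairs is < 2^{−2ⁿ}·2^{2^{2n}}. -/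
theorem counting_bound_bb84 (Δ : ℝ) (hΔ : Δ = 0.013) (η : ℝ)
    (hη0 : 0.509 < η) (hη1 : η ≤ 1)
    (n q k : ℕ) (hn : 10 ≤ n) (hq : 2 * q ≤ n - 10)
    (hk : (k : ℝ) ≤
      Real.logb 2 ((⌈4 / (2 ^ ((2 : ℝ) / 3) * (η * Δ + 2) ^ ((1 : ℝ) / 3) - 2)⌉ : ℤ) : ℝ) *
        2 ^ (2 * q + 2))
    (g : (Fin k → Bool) → (Fin k → Bool) → (Fin k → Bool) → Bool) :
    (Nat.card {f : (Fin n → Bool) × (Fin n → Bool) → Bool //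
        ∃ fA fB : (Fin n → Bool) → (Fin k → Bool), ∃ lam : Fin k → Bool,
          (3 / 4 : ℝ) * (2 : ℝ) ^ (2 * n) ≤
            ((Finset.univ.filter fun xy : (Fin n → Bool) × (Fin n → Bool) =>
              f xy = g (fA xy.1) (fB xy.2) lam).card : ℝ)} : ℝ) <
      (2 : ℝ) ^ (-((2 : ℝ) ^ n)) * (2 : ℝ) ^ ((2 : ℝ) ^ (2 * n)) := by
  classical
  -- bound on k
  have hk2 : k ≤ 11 * 2 ^ (n - 8) := by
    have hlog := aux_logb_le Δ hΔ η hη0 hη1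
    have hkR : (k : ℝ) ≤ 11 * 2 ^ (2 * q + 2) :=
      hk.trans (mul_le_mul_of_nonneg_right hlog (by positivity))
    have hk1 : k ≤ 11 * 2 ^ (2 * q + 2) := by exact_mod_cast hkR
    exact hk1.trans (Nat.mul_le_mul_left 11 (Nat.pow_le_pow_right (by norm_num) (by omega)))
  have hcardP : Fintype.card ((Fin n → Bool) × (Fin n → Bool)) = 2 ^ (2 * n) := by
    simp [Fintype.card_fun, two_mul, pow_add]
  have h4m : (2:ℕ) ^ (2 * n) = 4 * 2 ^ (2 * n - 2) := by
    conv_lhs => rw [show 2 * n = 2 + (2 * n - 2) by omega]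
    rw [pow_add]; norm_num
  have hmN : (2:ℕ) ^ (2 * n - 2) ≤ 2 ^ (2 * n) := Nat.pow_le_pow_right (by norm_num) (by omega)
  have hpow2n : (2:ℕ) ^ n ≤ 2 ^ (2 * n) := Nat.pow_le_pow_right (by norm_num) (by omega)
  -- the subtype cardinality as a filter
  have hcard : Nat.card {f : (Fin n → Bool) × (Fin n → Bool) → Bool //
        ∃ fA fB : (Fin n → Bool) → (Fin k → Bool), ∃ lam : Fin k → Bool,
          (3 / 4 : ℝ) * (2 : ℝ) ^ (2 * n) ≤
            ((Finset.univ.filter fun xy : (Fin n → Bool) × (Fin n → Bool) =>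
              f xy = g (fA xy.1) (fB xy.2) lam).card : ℝ)} =
      (Finset.univ.filter fun f : (Fin n → Bool) × (Fin n → Bool) → Bool =>
        ∃ fA fB : (Fin n → Bool) → (Fin k → Bool), ∃ lam : Fin k → Bool,
          (3 / 4 : ℝ) * (2 : ℝ) ^ (2 * n) ≤
            ((Finset.univ.filter fun xy : (Fin n → Bool) × (Fin n → Bool) =>
              f xy = g (fA xy.1) (fB xy.2) lam).card : ℝ)).card := by
    rw [Nat.card_eq_fintype_card]
    exact Fintype.card_subtype _
  -- union bound
  have hsub : (Finset.univ.filter fun f : (Fin n → Bool) × (Fin n → Bool) → Bool =>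
        ∃ fA fB : (Fin n → Bool) → (Fin k → Bool), ∃ lam : Fin k → Bool,
          (3 / 4 : ℝ) * (2 : ℝ) ^ (2 * n) ≤
            ((Finset.univ.filter fun xy : (Fin n → Bool) × (Fin n → Bool) =>
              f xy = g (fA xy.1) (fB xy.2) lam).card : ℝ)) ⊆
      Finset.univ.biUnion
        (fun tr : ((Fin n → Bool) → (Fin k → Bool)) ×
            (((Fin n → Bool) → (Fin k → Bool)) × (Fin k → Bool)) =>
          Finset.univ.filter fun f : (Fin n → Bool) × (Fin n → Bool) → Bool =>
            (Finset.univ.filter fun xy : (Fin n → Bool) × (Fin n → Bool) =>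
              f xy ≠ g (tr.1 xy.1) (tr.2.1 xy.2) tr.2.2).card ≤ 2 ^ (2 * n - 2)) := by
    intro f hf
    obtain ⟨fA, fB, lam, hag⟩ := (Finset.mem_filter.mp hf).2
    refine Finset.mem_biUnion.mpr ⟨(fA, fB, lam), Finset.mem_univ _,
      Finset.mem_filter.mpr ⟨Finset.mem_univ _, ?_⟩⟩
    have hsplit : (Finset.univ.filter fun xy : (Fin n → Bool) × (Fin n → Bool) =>
          f xy = g (fA xy.1) (fB xy.2) lam).card +
        (Finset.univ.filter fun xy : (Fin n → Bool) × (Fin n → Bool) =>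
          ¬ (f xy = g (fA xy.1) (fB xy.2) lam)).card = 2 ^ (2 * n) := by
      rw [Finset.card_filter_add_card_filter_not, Finset.card_univ, hcardP]
    have hBR : ((Finset.univ.filter fun xy : (Fin n → Bool) × (Fin n → Bool) =>
          ¬ (f xy = g (fA xy.1) (fB xy.2) lam)).card : ℝ) ≤ ((2 ^ (2 * n - 2) : ℕ) : ℝ) := by
      have hc : ((Finset.univ.filter fun xy : (Fin n → Bool) × (Fin n → Bool) =>
            f xy = g (fA xy.1) (fB xy.2) lam).card : ℝ) +
          ((Finset.univ.filter fun xy : (Fin n → Bool) × (Fin n → Bool) =>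
            ¬ (f xy = g (fA xy.1) (fB xy.2) lam)).card : ℝ) = ((2 ^ (2 * n) : ℕ) : ℝ) := by
        exact_mod_cast hsplit
      have h4R : ((2 ^ (2 * n) : ℕ) : ℝ) = 4 * ((2 ^ (2 * n - 2) : ℕ) : ℝ) := by
        exact_mod_cast h4m
      have h2R : ((2 ^ (2 * n) : ℕ) : ℝ) = (2 : ℝ) ^ (2 * n) := by push_cast; ring
      linarith [hag]
    have hBN : (Finset.univ.filter fun xy : (Fin n → Bool) × (Fin n → Bool) =>
          ¬ (f xy = g (fA xy.1) (fB xy.2) lam)).card ≤ 2 ^ (2 * n - 2) := by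
      exact_mod_cast hBR
    simpa [ne_eq] using hBN
  -- per-triple bound
  have hper : ∀ tr : ((Fin n → Bool) → (Fin k → Bool)) ×
      (((Fin n → Bool) → (Fin k → Bool)) × (Fin k → Bool)),
      (Finset.univ.filter fun f : (Fin n → Bool) × (Fin n → Bool) → Bool =>
        (Finset.univ.filter fun xy : (Fin n → Bool) × (Fin n → Bool) =>
          f xy ≠ g (tr.1 xy.1) (tr.2.1 xy.2) tr.2.2).card ≤ 2 ^ (2 * n - 2)).card ≤
      ∑ i ∈ Finset.range (2 ^ (2 * n - 2) + 1), (2 ^ (2 * n)).choose i := by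
    intro tr
    have h := aux_count_close (α := (Fin n → Bool) × (Fin n → Bool))
      (fun xy => g (tr.1 xy.1) (tr.2.1 xy.2) tr.2.2) (2 ^ (2 * n - 2))
    rw [hcardP] at h
    simpa using h
  -- cardinality of the triple set
  have hcardT : Fintype.card (((Fin n → Bool) → (Fin k → Bool)) ×
      (((Fin n → Bool) → (Fin k → Bool)) × (Fin k → Bool))) = 2 ^ (k + k * 2 ^ n + k * 2 ^ n) := by
    simp only [Fintype.card_prod, Fintype.card_fun, Fintype.card_bool, Fintype.card_fin]
    rw [← pow_mul, ← pow_add, ← pow_add]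
    congr 1
    ring
  have hcount : (Finset.univ.filter fun f : (Fin n → Bool) × (Fin n → Bool) → Bool =>
        ∃ fA fB : (Fin n → Bool) → (Fin k → Bool), ∃ lam : Fin k → Bool,
          (3 / 4 : ℝ) * (2 : ℝ) ^ (2 * n) ≤
            ((Finset.univ.filter fun xy : (Fin n → Bool) × (Fin n → Bool) =>
              f xy = g (fA xy.1) (fB xy.2) lam).card : ℝ)).card ≤
      2 ^ (k + k * 2 ^ n + k * 2 ^ n) *
        (∑ i ∈ Finset.range (2 ^ (2 * n - 2) + 1), (2 ^ (2 * n)).choose i) := by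
    refine (Finset.card_le_card hsub).trans (Finset.card_biUnion_le.trans ?_)
    have hs := Finset.sum_le_card_nsmul
      (Finset.univ : Finset (((Fin n → Bool) → (Fin k → Bool)) ×
        (((Fin n → Bool) → (Fin k → Bool)) × (Fin k → Bool))))
      (fun tr => (Finset.univ.filter fun f : (Fin n → Bool) × (Fin n → Bool) → Bool =>
        (Finset.univ.filter fun xy : (Fin n → Bool) × (Fin n → Bool) =>
          f xy ≠ g (tr.1 xy.1) (tr.2.1 xy.2) tr.2.2).card ≤ 2 ^ (2 * n - 2)).card)
      (∑ i ∈ Finset.range (2 ^ (2 * n - 2) + 1), (2 ^ (2 * n)).choose i)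
      (fun tr _ => hper tr)
    rw [smul_eq_mul, Finset.card_univ, hcardT] at hs
    exact hs
  -- key real inequality
  have hkeyR : (2 : ℝ) ^ (k + k * 2 ^ n + k * 2 ^ n) *
      ((4 / 3 : ℝ) ^ (2 ^ (2 * n)) * 3 ^ (2 ^ (2 * n - 2))) <
      (2 : ℝ) ^ (2 ^ (2 * n) - 2 ^ n : ℕ) := by
    have h3 : (0 : ℝ) < 3 ^ (3 * 2 ^ (2 * n - 2)) := by positivity
    rw [← mul_lt_mul_iff_of_pos_right h3]
    have e1 : ((4 / 3 : ℝ) ^ (2 ^ (2 * n)) * 3 ^ (2 ^ (2 * n - 2))) * 3 ^ (3 * 2 ^ (2 * n - 2)) =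
        4 ^ (2 ^ (2 * n)) := by
      rw [mul_assoc, ← pow_add,
        show 2 ^ (2 * n - 2) + 3 * 2 ^ (2 * n - 2) = 2 ^ (2 * n) from by rw [h4m]; ring,
        ← mul_pow]
      norm_num
    have e2 : (3 : ℝ) ^ (3 * 2 ^ (2 * n - 2)) = 27 ^ (2 ^ (2 * n - 2)) := by
      rw [show (27 : ℝ) = 3 ^ 3 by norm_num, ← pow_mul]
    rw [mul_assoc, e1]
    conv_rhs => rw [e2]
    exact_mod_cast aux_nat_ineq n k hn hk2
  -- right-hand side
  have hRHS : (2 : ℝ) ^ (-((2 : ℝ) ^ n)) * (2 : ℝ) ^ ((2 : ℝ) ^ (2 * n)) =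
      (2 : ℝ) ^ (2 ^ (2 * n) - 2 ^ n : ℕ) := by
    rw [← Real.rpow_add (by norm_num : (0 : ℝ) < 2)]
    rw [← Real.rpow_natCast 2 (2 ^ (2 * n) - 2 ^ n)]
    congr 1
    rw [Nat.cast_sub hpow2n]
    push_cast
    ring
  rw [hcard, hRHS]
  calc ((Finset.univ.filter fun f : (Fin n → Bool) × (Fin n → Bool) → Bool =>
        ∃ fA fB : (Fin n → Bool) → (Fin k → Bool), ∃ lam : Fin k → Bool,
          (3 / 4 : ℝ) * (2 : ℝ) ^ (2 * n) ≤
            ((Finset.univ.filter fun xy : (Fin n → Bool) × (Fin n → Bool) =>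
              f xy = g (fA xy.1) (fB xy.2) lam).card : ℝ)).card : ℝ)
      ≤ ((2 ^ (k + k * 2 ^ n + k * 2 ^ n) *
          (∑ i ∈ Finset.range (2 ^ (2 * n - 2) + 1), (2 ^ (2 * n)).choose i) : ℕ) : ℝ) := by
        exact_mod_cast hcount
    _ = (2 : ℝ) ^ (k + k * 2 ^ n + k * 2 ^ n) *
          (∑ i ∈ Finset.range (2 ^ (2 * n - 2) + 1), ((2 ^ (2 * n)).choose i : ℝ)) := by
        push_cast
        ring
    _ ≤ (2 : ℝ) ^ (k + k * 2 ^ n + k * 2 ^ n) *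
          ((4 / 3 : ℝ) ^ (2 ^ (2 * n)) * 3 ^ (2 ^ (2 * n - 2))) := by
        exact mul_le_mul_of_nonneg_left (aux_sum_choose (2 ^ (2 * n)) (2 ^ (2 * n - 2)) hmN)
          (by positivity)
    _ < (2 : ℝ) ^ (2 ^ (2 * n) - 2 ^ n : ℕ) := hkeyR

end
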